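/- If u ∈ S_n is a single cycle of odd length k ≥ 3 (so u is an even permutation), then there exists h ∈ S_n with h^3 = 1 and (uh)^3 = 1. -/

import Mathlib

open Equiv Equiv.Perm List

section Bases
variable {α : Type*} [DecidableEq α]

theorem c3_fix' {a b c w : α} (h1 : w ≠ a) (h2 : w ≠ b) (h3 : w ≠ c) :
    (Equiv.swap a b * Equiv.swap b c) w = w := by
  simp [Equiv.Perm.mul_apply, swap_apply_of_ne_of_ne, h1, h2, h3]

theorem c3_cube' {a b c : α} (hab : a ≠ b) (hac : a ≠ c) (hbc : b ≠ c) :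
    (Equiv.swap a b * Equiv.swap b c) ^ 3 = 1 := by
  ext w
  by_cases hwa : w = a
  · subst hwa
    simp [pow_succ, Equiv.Perm.mul_apply, swap_apply_def, hab, hac, hbc, hab.symm, hac.symm, hbc.symm]
  by_cases hwb : w = b
  · subst hwb
    simp [pow_succ, Equiv.Perm.mul_apply, swap_apply_def, hab, hac, hbc, hab.symm, hac.symm, hbc.symm]
  by_cases hwc : w = c
  · subst hwc
    simp [pow_succ, Equiv.Perm.mul_apply, swap_apply_def, hab, hac, hbc, hab.symm, hac.symm, hbc.symm]
  · simp [pow_succ, Equiv.Perm.mul_apply, swap_apply_def, hwa, hwb, hwc]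

theorem base3 (a0 a1 a2 : α) (hnd : ([a0,a1,a2] : List α).Nodup) :
    ∃ x y : Equiv.Perm α,
      ([a0,a1,a2] : List α).formPerm = x * y ∧ x^3=1 ∧ y^3=1 ∧
      (∀ w, x w ≠ w → w ∈ ([a0,a1,a2] : List α)) ∧
      (∀ w, y w ≠ w → w ∈ ([a0,a1,a2] : List α).dropLast) := by
  simp only [nodup_cons, mem_cons, mem_singleton, not_or, nodup_nil, and_true, not_mem_nil,
    not_false_eq_true, nodup_singleton] at hnd
  obtain ⟨⟨h01, h02⟩, h12⟩ := hnd
  refine ⟨Equiv.swap a0 a1 * Equiv.swap a1 a2, 1, ?_, c3_cube' h01 h02 h12, one_pow 3, ?_, ?_⟩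
  · rw [mul_one]
    simp [formPerm_cons_cons, formPerm_pair]
  · intro w hw
    by_contra hn
    simp only [mem_cons, mem_singleton, not_or] at hn
    exact hw (c3_fix' hn.1 hn.2.1 hn.2.2.1)
  · intro w hw
    simp at hw

theorem swap_id5' (a0 a1 a2 a3 a4 : α) (h01 : a0 ≠ a1) (h02 : a0 ≠ a2) (h03 : a0 ≠ a3) (h04 : a0 ≠ a4) (h12 : a1 ≠ a2) (h13 : a1 ≠ a3) (h14 : a1 ≠ a4) (h23 : a2 ≠ a3) (h24 : a2 ≠ a4) (h34 : a3 ≠ a4) :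
    Equiv.swap a0 a1 * (Equiv.swap a1 a2 * (Equiv.swap a2 a3 * Equiv.swap a3 a4)) =
      (Equiv.swap a0 a1 * Equiv.swap a1 a4) * (Equiv.swap a1 a2 * Equiv.swap a2 a3) := by
  ext w
  by_cases hw0 : w = a0
  · subst hw0; simp [Equiv.Perm.mul_apply, Equiv.swap_apply_def, h01, h02, h03, h04, h12, h13, h14, h23, h24, h34, h01.symm, h02.symm, h03.symm, h04.symm, h12.symm, h13.symm, h14.symm, h23.symm, h24.symm, h34.symm]
  by_cases hw1 : w = a1
  · subst hw1; simp [Equiv.Perm.mul_apply, Equiv.swap_apply_def, h01, h02, h03, h04, h12, h13, h14, h23, h24, h34, h01.symm, h02.symm, h03.symm, h04.symm, h12.symm, h13.symm, h14.symm, h23.symm, h24.symm, h34.symm]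
  by_cases hw2 : w = a2
  · subst hw2; simp [Equiv.Perm.mul_apply, Equiv.swap_apply_def, h01, h02, h03, h04, h12, h13, h14, h23, h24, h34, h01.symm, h02.symm, h03.symm, h04.symm, h12.symm, h13.symm, h14.symm, h23.symm, h24.symm, h34.symm]
  by_cases hw3 : w = a3
  · subst hw3; simp [Equiv.Perm.mul_apply, Equiv.swap_apply_def, h01, h02, h03, h04, h12, h13, h14, h23, h24, h34, h01.symm, h02.symm, h03.symm, h04.symm, h12.symm, h13.symm, h14.symm, h23.symm, h24.symm, h34.symm]
  by_cases hw4 : w = a4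
  · subst hw4; simp [Equiv.Perm.mul_apply, Equiv.swap_apply_def, h01, h02, h03, h04, h12, h13, h14, h23, h24, h34, h01.symm, h02.symm, h03.symm, h04.symm, h12.symm, h13.symm, h14.symm, h23.symm, h24.symm, h34.symm]
  · simp [Equiv.Perm.mul_apply, Equiv.swap_apply_def, hw0, hw1, hw2, hw3, hw4]

theorem swap_id7' (a0 a1 a2 a3 a4 a5 a6 : α) (h01 : a0 ≠ a1) (h02 : a0 ≠ a2) (h03 : a0 ≠ a3) (h04 : a0 ≠ a4) (h05 : a0 ≠ a5) (h06 : a0 ≠ a6) (h12 : a1 ≠ a2) (h13 : a1 ≠ a3) (h14 : a1 ≠ a4) (h15 : a1 ≠ a5) (h16 : a1 ≠ a6) (h23 : a2 ≠ a3) (h24 : a2 ≠ a4) (h25 : a2 ≠ a5) (h26 : a2 ≠ a6) (h34 : a3 ≠ a4) (h35 : a3 ≠ a5) (h36 : a3 ≠ a6) (h45 : a4 ≠ a5) (h46 : a4 ≠ a6) (h56 : a5 ≠ a6) :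
    Equiv.swap a0 a1 * (Equiv.swap a1 a2 * (Equiv.swap a2 a3 * (Equiv.swap a3 a4 *
        (Equiv.swap a4 a5 * Equiv.swap a5 a6)))) =
      (Equiv.swap a0 a3 * Equiv.swap a3 a6) *
        ((Equiv.swap a0 a1 * Equiv.swap a1 a2) * (Equiv.swap a3 a4 * Equiv.swap a4 a5)) := by
  ext w
  by_cases hw0 : w = a0
  · subst hw0; simp [Equiv.Perm.mul_apply, Equiv.swap_apply_def, h01, h02, h03, h04, h05, h06, h12, h13, h14, h15, h16, h23, h24, h25, h26, h34, h35, h36, h45, h46, h56, h01.symm, h02.symm, h03.symm, h04.symm, h05.symm, h06.symm, h12.symm, h13.symm, h14.symm, h15.symm, h16.symm, h23.symm, h24.symm, h25.symm, h26.symm, h34.symm, h35.symm, h36.symm, h45.symm, h46.symm, h56.symm]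
  by_cases hw1 : w = a1
  · subst hw1; simp [Equiv.Perm.mul_apply, Equiv.swap_apply_def, h01, h02, h03, h04, h05, h06, h12, h13, h14, h15, h16, h23, h24, h25, h26, h34, h35, h36, h45, h46, h56, h01.symm, h02.symm, h03.symm, h04.symm, h05.symm, h06.symm, h12.symm, h13.symm, h14.symm, h15.symm, h16.symm, h23.symm, h24.symm, h25.symm, h26.symm, h34.symm, h35.symm, h36.symm, h45.symm, h46.symm, h56.symm]
  by_cases hw2 : w = a2
  · subst hw2; simp [Equiv.Perm.mul_apply, Equiv.swap_apply_def, h01, h02, h03, h04, h05, h06, h12, h13, h14, h15, h16, h23, h24, h25, h26, h34, h35, h36, h45, h46, h56, h01.symm, h02.symm, h03.symm, h04.symm, h05.symm, h06.symm, h12.symm, h13.symm, h14.symm, h15.symm, h16.symm, h23.symm, h24.symm, h25.symm, h26.symm, h34.symm, h35.symm, h36.symm, h45.symm, h46.symm, h56.symm]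
  by_cases hw3 : w = a3
  · subst hw3; simp [Equiv.Perm.mul_apply, Equiv.swap_apply_def, h01, h02, h03, h04, h05, h06, h12, h13, h14, h15, h16, h23, h24, h25, h26, h34, h35, h36, h45, h46, h56, h01.symm, h02.symm, h03.symm, h04.symm, h05.symm, h06.symm, h12.symm, h13.symm, h14.symm, h15.symm, h16.symm, h23.symm, h24.symm, h25.symm, h26.symm, h34.symm, h35.symm, h36.symm, h45.symm, h46.symm, h56.symm]
  by_cases hw4 : w = a4
  · subst hw4; simp [Equiv.Perm.mul_apply, Equiv.swap_apply_def, h01, h02, h03, h04, h05, h06, h12, h13, h14, h15, h16, h23, h24, h25, h26, h34, h35, h36, h45, h46, h56, h01.symm, h02.symm, h03.symm, h04.symm, h05.symm, h06.symm, h12.symm, h13.symm, h14.symm, h15.symm, h16.symm, h23.symm, h24.symm, h25.symm, h26.symm, h34.symm, h35.symm, h36.symm, h45.symm, h46.symm, h56.symm]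
  by_cases hw5 : w = a5
  · subst hw5; simp [Equiv.Perm.mul_apply, Equiv.swap_apply_def, h01, h02, h03, h04, h05, h06, h12, h13, h14, h15, h16, h23, h24, h25, h26, h34, h35, h36, h45, h46, h56, h01.symm, h02.symm, h03.symm, h04.symm, h05.symm, h06.symm, h12.symm, h13.symm, h14.symm, h15.symm, h16.symm, h23.symm, h24.symm, h25.symm, h26.symm, h34.symm, h35.symm, h36.symm, h45.symm, h46.symm, h56.symm]
  by_cases hw6 : w = a6
  · subst hw6; simp [Equiv.Perm.mul_apply, Equiv.swap_apply_def, h01, h02, h03, h04, h05, h06, h12, h13, h14, h15, h16, h23, h24, h25, h26, h34, h35, h36, h45, h46, h56, h01.symm, h02.symm, h03.symm, h04.symm, h05.symm, h06.symm, h12.symm, h13.symm, h14.symm, h15.symm, h16.symm, h23.symm, h24.symm, h25.symm, h26.symm, h34.symm, h35.symm, h36.symm, h45.symm, h46.symm, h56.symm]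
  · simp [Equiv.Perm.mul_apply, Equiv.swap_apply_def, hw0, hw1, hw2, hw3, hw4, hw5, hw6]

theorem base5 (a0 a1 a2 a3 a4 : α) (hnd : ([a0,a1,a2,a3,a4] : List α).Nodup) :
    ∃ x y : Equiv.Perm α,
      ([a0,a1,a2,a3,a4] : List α).formPerm = x * y ∧ x^3=1 ∧ y^3=1 ∧
      (∀ w, x w ≠ w → w ∈ ([a0,a1,a2,a3,a4] : List α)) ∧
      (∀ w, y w ≠ w → w ∈ ([a0,a1,a2,a3,a4] : List α).dropLast) := by
  simp only [nodup_cons, mem_cons, mem_singleton, not_or, nodup_nil, and_true, not_mem_nil,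
    not_false_eq_true, nodup_singleton] at hnd
  obtain ⟨⟨h01, h02, h03, h04⟩, ⟨h12, h13, h14⟩, ⟨h23, h24⟩, h34⟩ := hnd
  refine ⟨Equiv.swap a0 a1 * Equiv.swap a1 a4, Equiv.swap a1 a2 * Equiv.swap a2 a3,
    ?_, c3_cube' h01 h04 h14, c3_cube' h12 h13 h23, ?_, ?_⟩
  · have e : ([a0,a1,a2,a3,a4] : List α).formPerm =
        Equiv.swap a0 a1 * (Equiv.swap a1 a2 * (Equiv.swap a2 a3 * Equiv.swap a3 a4)) := by
      simp [formPerm_cons_cons, formPerm_pair, mul_assoc]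
    rw [e, swap_id5' a0 a1 a2 a3 a4 h01 h02 h03 h04 h12 h13 h14 h23 h24 h34]
  · intro w hw
    by_contra hn
    simp only [mem_cons, mem_singleton, not_or] at hn
    exact hw (c3_fix' hn.1 hn.2.1 hn.2.2.2.2.1)
  · intro w hw
    by_contra hn
    simp only [dropLast_cons₂, dropLast_singleton, mem_cons, mem_singleton, not_or] at hn
    exact hw (c3_fix' hn.2.1 hn.2.2.1 hn.2.2.2.1)

theorem base7 (a0 a1 a2 a3 a4 a5 a6 : α) (hnd : ([a0,a1,a2,a3,a4,a5,a6] : List α).Nodup) :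
    ∃ x y : Equiv.Perm α,
      ([a0,a1,a2,a3,a4,a5,a6] : List α).formPerm = x * y ∧ x^3=1 ∧ y^3=1 ∧
      (∀ w, x w ≠ w → w ∈ ([a0,a1,a2,a3,a4,a5,a6] : List α)) ∧
      (∀ w, y w ≠ w → w ∈ ([a0,a1,a2,a3,a4,a5,a6] : List α).dropLast) := by
  simp only [nodup_cons, mem_cons, mem_singleton, not_or, nodup_nil, and_true, not_mem_nil,
    not_false_eq_true, nodup_singleton] at hnd
  obtain ⟨⟨h01, h02, h03, h04, h05, h06⟩, ⟨h12, h13, h14, h15, h16⟩, ⟨h23, h24, h25, h26⟩,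
    ⟨h34, h35, h36⟩, ⟨h45, h46⟩, h56⟩ := hnd
  have hy3 : ((Equiv.swap a0 a1 * Equiv.swap a1 a2) * (Equiv.swap a3 a4 * Equiv.swap a4 a5)) ^ 3
      = 1 := by
    have d : Equiv.Perm.Disjoint (Equiv.swap a0 a1 * Equiv.swap a1 a2)
        (Equiv.swap a3 a4 * Equiv.swap a4 a5) := by
      intro w
      by_cases hw0 : w = a0
      · subst hw0; exact Or.inr (c3_fix' h03 h04 h05)
      by_cases hw1 : w = a1
      · subst hw1; exact Or.inr (c3_fix' h13 h14 h15)
      by_cases hw2 : w = a2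
      · subst hw2; exact Or.inr (c3_fix' h23 h24 h25)
      · exact Or.inl (c3_fix' hw0 hw1 hw2)
    rw [d.commute.mul_pow, c3_cube' h01 h02 h12, c3_cube' h34 h35 h45, one_mul]
  refine ⟨Equiv.swap a0 a3 * Equiv.swap a3 a6,
    (Equiv.swap a0 a1 * Equiv.swap a1 a2) * (Equiv.swap a3 a4 * Equiv.swap a4 a5),
    ?_, c3_cube' h03 h06 h36, hy3, ?_, ?_⟩
  · have e : ([a0,a1,a2,a3,a4,a5,a6] : List α).formPerm =
        Equiv.swap a0 a1 * (Equiv.swap a1 a2 * (Equiv.swap a2 a3 * (Equiv.swap a3 a4 *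
          (Equiv.swap a4 a5 * Equiv.swap a5 a6)))) := by
      simp [formPerm_cons_cons, formPerm_pair, mul_assoc]
    rw [e, swap_id7' a0 a1 a2 a3 a4 a5 a6 h01 h02 h03 h04 h05 h06 h12 h13 h14 h15 h16 h23 h24
      h25 h26 h34 h35 h36 h45 h46 h56]
  · intro w hw
    by_contra hn
    simp only [mem_cons, mem_singleton, not_or] at hn
    exact hw (c3_fix' hn.1 hn.2.2.2.1 hn.2.2.2.2.2.2.1)
  · intro w hw
    by_contra hn
    simp only [dropLast_cons₂, dropLast_singleton, mem_cons, mem_singleton, not_or] at hn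
    obtain ⟨hn0, hn1, hn2, hn3, hn4, hn5⟩ := hn
    apply hw
    rw [Equiv.Perm.mul_apply, c3_fix' hn3 hn4 hn5.1, c3_fix' hn0 hn1 hn2]

theorem swap_idStep (a0 a1 a2 a3 a4 a5 z : α)
    (ha0a1 : a0 ≠ a1) (ha0a2 : a0 ≠ a2) (ha0a3 : a0 ≠ a3) (ha0a4 : a0 ≠ a4) (ha0a5 : a0 ≠ a5) (ha0z : a0 ≠ z) (ha1a2 : a1 ≠ a2) (ha1a3 : a1 ≠ a3) (ha1a4 : a1 ≠ a4) (ha1a5 : a1 ≠ a5) (ha1z : a1 ≠ z) (ha2a3 : a2 ≠ a3) (ha2a4 : a2 ≠ a4) (ha2a5 : a2 ≠ a5) (ha2z : a2 ≠ z) (ha3a4 : a3 ≠ a4) (ha3a5 : a3 ≠ a5) (ha3z : a3 ≠ z) (ha4a5 : a4 ≠ a5) (ha4z : a4 ≠ z) (ha5z : a5 ≠ z) :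
    Equiv.swap a0 a1 * (Equiv.swap a1 a2 * (Equiv.swap a2 a3 * (Equiv.swap a3 a4 * (Equiv.swap a4 a5 * Equiv.swap a5 z)))) =
      Equiv.swap a0 a1 * (Equiv.swap a1 z * (Equiv.swap a2 a3 * (Equiv.swap a3 a4 * (Equiv.swap a1 a4 * Equiv.swap a4 a5)))) := by
  ext w
  by_cases hwa0 : w = a0
  · subst hwa0; simp [Equiv.Perm.mul_apply, Equiv.swap_apply_def, ha0a1, ha0a2, ha0a3, ha0a4, ha0a5, ha0z, ha1a2, ha1a3, ha1a4, ha1a5, ha1z, ha2a3, ha2a4, ha2a5, ha2z, ha3a4, ha3a5, ha3z, ha4a5, ha4z, ha5z, ha0a1.symm, ha0a2.symm, ha0a3.symm, ha0a4.symm, ha0a5.symm, ha0z.symm, ha1a2.symm, ha1a3.symm, ha1a4.symm, ha1a5.symm, ha1z.symm, ha2a3.symm, ha2a4.symm, ha2a5.symm, ha2z.symm, ha3a4.symm, ha3a5.symm, ha3z.symm, ha4a5.symm, ha4z.symm, ha5z.symm]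
  by_cases hwa1 : w = a1
  · subst hwa1; simp [Equiv.Perm.mul_apply, Equiv.swap_apply_def, ha0a1, ha0a2, ha0a3, ha0a4, ha0a5, ha0z, ha1a2, ha1a3, ha1a4, ha1a5, ha1z, ha2a3, ha2a4, ha2a5, ha2z, ha3a4, ha3a5, ha3z, ha4a5, ha4z, ha5z, ha0a1.symm, ha0a2.symm, ha0a3.symm, ha0a4.symm, ha0a5.symm, ha0z.symm, ha1a2.symm, ha1a3.symm, ha1a4.symm, ha1a5.symm, ha1z.symm, ha2a3.symm, ha2a4.symm, ha2a5.symm, ha2z.symm, ha3a4.symm, ha3a5.symm, ha3z.symm, ha4a5.symm, ha4z.symm, ha5z.symm]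
  by_cases hwa2 : w = a2
  · subst hwa2; simp [Equiv.Perm.mul_apply, Equiv.swap_apply_def, ha0a1, ha0a2, ha0a3, ha0a4, ha0a5, ha0z, ha1a2, ha1a3, ha1a4, ha1a5, ha1z, ha2a3, ha2a4, ha2a5, ha2z, ha3a4, ha3a5, ha3z, ha4a5, ha4z, ha5z, ha0a1.symm, ha0a2.symm, ha0a3.symm, ha0a4.symm, ha0a5.symm, ha0z.symm, ha1a2.symm, ha1a3.symm, ha1a4.symm, ha1a5.symm, ha1z.symm, ha2a3.symm, ha2a4.symm, ha2a5.symm, ha2z.symm, ha3a4.symm, ha3a5.symm, ha3z.symm, ha4a5.symm, ha4z.symm, ha5z.symm]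
  by_cases hwa3 : w = a3
  · subst hwa3; simp [Equiv.Perm.mul_apply, Equiv.swap_apply_def, ha0a1, ha0a2, ha0a3, ha0a4, ha0a5, ha0z, ha1a2, ha1a3, ha1a4, ha1a5, ha1z, ha2a3, ha2a4, ha2a5, ha2z, ha3a4, ha3a5, ha3z, ha4a5, ha4z, ha5z, ha0a1.symm, ha0a2.symm, ha0a3.symm, ha0a4.symm, ha0a5.symm, ha0z.symm, ha1a2.symm, ha1a3.symm, ha1a4.symm, ha1a5.symm, ha1z.symm, ha2a3.symm, ha2a4.symm, ha2a5.symm, ha2z.symm, ha3a4.symm, ha3a5.symm, ha3z.symm, ha4a5.symm, ha4z.symm, ha5z.symm]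
  by_cases hwa4 : w = a4
  · subst hwa4; simp [Equiv.Perm.mul_apply, Equiv.swap_apply_def, ha0a1, ha0a2, ha0a3, ha0a4, ha0a5, ha0z, ha1a2, ha1a3, ha1a4, ha1a5, ha1z, ha2a3, ha2a4, ha2a5, ha2z, ha3a4, ha3a5, ha3z, ha4a5, ha4z, ha5z, ha0a1.symm, ha0a2.symm, ha0a3.symm, ha0a4.symm, ha0a5.symm, ha0z.symm, ha1a2.symm, ha1a3.symm, ha1a4.symm, ha1a5.symm, ha1z.symm, ha2a3.symm, ha2a4.symm, ha2a5.symm, ha2z.symm, ha3a4.symm, ha3a5.symm, ha3z.symm, ha4a5.symm, ha4z.symm, ha5z.symm]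
  by_cases hwa5 : w = a5
  · subst hwa5; simp [Equiv.Perm.mul_apply, Equiv.swap_apply_def, ha0a1, ha0a2, ha0a3, ha0a4, ha0a5, ha0z, ha1a2, ha1a3, ha1a4, ha1a5, ha1z, ha2a3, ha2a4, ha2a5, ha2z, ha3a4, ha3a5, ha3z, ha4a5, ha4z, ha5z, ha0a1.symm, ha0a2.symm, ha0a3.symm, ha0a4.symm, ha0a5.symm, ha0z.symm, ha1a2.symm, ha1a3.symm, ha1a4.symm, ha1a5.symm, ha1z.symm, ha2a3.symm, ha2a4.symm, ha2a5.symm, ha2z.symm, ha3a4.symm, ha3a5.symm, ha3z.symm, ha4a5.symm, ha4z.symm, ha5z.symm]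
  by_cases hwz : w = z
  · subst hwz; simp [Equiv.Perm.mul_apply, Equiv.swap_apply_def, ha0a1, ha0a2, ha0a3, ha0a4, ha0a5, ha0z, ha1a2, ha1a3, ha1a4, ha1a5, ha1z, ha2a3, ha2a4, ha2a5, ha2z, ha3a4, ha3a5, ha3z, ha4a5, ha4z, ha5z, ha0a1.symm, ha0a2.symm, ha0a3.symm, ha0a4.symm, ha0a5.symm, ha0z.symm, ha1a2.symm, ha1a3.symm, ha1a4.symm, ha1a5.symm, ha1z.symm, ha2a3.symm, ha2a4.symm, ha2a5.symm, ha2z.symm, ha3a4.symm, ha3a5.symm, ha3z.symm, ha4a5.symm, ha4z.symm, ha5z.symm]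
  · simp [Equiv.Perm.mul_apply, Equiv.swap_apply_def, hwa0, hwa1, hwa2, hwa3, hwa4, hwa5, hwz]

set_option maxHeartbeats 1000000 in
theorem step_lemma (a0 a1 a2 a3 a4 a5 a6 a7 z : α) (t' : List α)
    (hnd : (a0::a1::a2::a3::a4::a5::a6::a7::(t'++[z])).Nodup)
    (x' y' : Equiv.Perm α)
    (hM' : (a5::a6::a7::t').formPerm = x' * y')
    (hx3 : x'^3 = 1) (hy3 : y'^3 = 1)
    (hxs : ∀ w, x' w ≠ w → w ∈ (a5::a6::a7::t'))
    (hys : ∀ w, y' w ≠ w → w ∈ (a5::a6::a7::t').dropLast) :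
    ∃ x y : Equiv.Perm α,
      (a0::a1::a2::a3::a4::a5::a6::a7::(t'++[z])).formPerm = x * y ∧ x^3=1 ∧ y^3=1 ∧
      (∀ w, x w ≠ w → w ∈ (a0::a1::a2::a3::a4::a5::a6::a7::(t'++[z]))) ∧
      (∀ w, y w ≠ w → w ∈ (a0::a1::a2::a3::a4::a5::a6::a7::(t'++[z])).dropLast) := by
  -- nodup facts
  simp only [nodup_cons, mem_cons, mem_append, mem_singleton, not_or] at hnd
  obtain ⟨⟨h01,h02,h03,h04,h05,h06,h07,h0t,h0z,-⟩,⟨h12,h13,h14,h15,h16,h17,h1t,h1z,-⟩,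
    ⟨h23,h24,h25,h26,h27,h2t,h2z,-⟩,⟨h34,h35,h36,h37,h3t,h3z,-⟩,⟨h45,h46,h47,h4t,h4z,-⟩,
    ⟨h56,h57,h5t,h5z,-⟩,⟨h67,h6t,h6z,-⟩,⟨h7t,h7z,-⟩,hndtz⟩ := hnd
  have hndt : t'.Nodup := (List.nodup_append.mp hndtz).1
  have hzt : z ∉ t' := by
    have := (List.nodup_append.mp hndtz).2.2
    intro h
    exact this _ h _ (by simp) rfl
  set M : List α := a5::a6::a7::t' with hMdef
  have hMne : M ≠ [] := by simp [hMdef]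
  set zin : α := M.getLast hMne with hzindef
  have hzinM : zin ∈ M := getLast_mem hMne
  have ndM : M.Nodup := by
    simp only [hMdef, nodup_cons, mem_cons, not_or]
    exact ⟨⟨h56, h57, h5t⟩, ⟨h67, h6t⟩, h7t, hndt⟩
  have haM0 : a0 ∉ M := by simp only [hMdef, mem_cons, not_or]; exact ⟨h05, h06, h07, h0t⟩
  have haM1 : a1 ∉ M := by simp only [hMdef, mem_cons, not_or]; exact ⟨h15, h16, h17, h1t⟩
  have haM2 : a2 ∉ M := by simp only [hMdef, mem_cons, not_or]; exact ⟨h25, h26, h27, h2t⟩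
  have haM3 : a3 ∉ M := by simp only [hMdef, mem_cons, not_or]; exact ⟨h35, h36, h37, h3t⟩
  have haM4 : a4 ∉ M := by simp only [hMdef, mem_cons, not_or]; exact ⟨h45, h46, h47, h4t⟩
  have hzM : z ∉ M := by
    simp only [hMdef, mem_cons, not_or]
    exact ⟨Ne.symm h5z, Ne.symm h6z, Ne.symm h7z, hzt⟩
  have h1zin : a1 ≠ zin := fun h => haM1 (h ▸ hzinM)
  have h4zin : a4 ≠ zin := fun h => haM4 (h ▸ hzinM)
  have hzzin : z ≠ zin := fun h => hzM (h ▸ hzinM)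
  have hzinD : zin ∉ M.dropLast := by
    intro h
    have h' : (M.dropLast ++ [zin]).Nodup := by
      rw [hzindef, dropLast_append_getLast hMne]; exact ndM
    exact (List.nodup_append.mp h').2.2 _ h _ (by simp) rfl
  have hzD : z ∉ M.dropLast := fun h => hzM (dropLast_subset _ h)
  have hy'zin : y' zin = zin := by
    by_contra h; exact hzinD (hys _ h)
  have hy'z : y' z = z := by
    by_contra h; exact hzD (hys _ h)
  have hx'z : x' z = z := by by_contra h; exact hzM (hxs _ h)
  have hx'a1 : x' a1 = a1 := by by_contra h; exact haM1 (hxs _ h)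
  have hx'a4 : x' a4 = a4 := by by_contra h; exact haM4 (hxs _ h)
  have hx'zin : x' zin = a5 := by
    have h5 : M.formPerm zin = a5 := by
      rw [hzindef]; exact formPerm_apply_getLast a5 (a6::a7::t')
    rw [hM', Equiv.Perm.mul_apply, hy'zin] at h5
    exact h5
  -- the candidate permutations
  set p : Perm α := Equiv.swap a0 a1 * Equiv.swap a1 z with hpdef
  set q : Perm α := Equiv.swap a2 a3 * Equiv.swap a3 a4 with hqdef
  set r : Perm α := Equiv.swap a1 a4 * Equiv.swap a4 zin with hrdef
  refine ⟨p * (q * x'), r * y', ?_, ?_, ?_, ?_, ?_⟩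
  · -- the decomposition identity
    have eqF : (a0::a1::a2::a3::a4::a5::a6::a7::(t'++[z])).formPerm =
        Equiv.swap a0 a1 * (Equiv.swap a1 a2 * (Equiv.swap a2 a3 * (Equiv.swap a3 a4 *
          (Equiv.swap a4 a5 * (M ++ [z]).formPerm)))) := by
      rw [formPerm_cons_cons, formPerm_cons_cons, formPerm_cons_cons, formPerm_cons_cons,
        formPerm_cons_cons]
      rfl
    have eqMz : (M ++ [z]).formPerm = M.formPerm * Equiv.swap zin z := by
      conv_lhs => rw [← dropLast_append_getLast hMne, ← hzindef]
      rw [append_assoc]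
      rw [show [zin] ++ [z] = [zin, z] from rfl]
      rw [formPerm_append_pair, hzindef, dropLast_append_getLast hMne]
    have hcy : y' * Equiv.swap zin z = Equiv.swap zin z * y' := by
      rw [mul_swap_eq_swap_mul, hy'zin, hy'z]
    have hcx : x' * Equiv.swap zin z = Equiv.swap a5 z * x' := by
      rw [mul_swap_eq_swap_mul, hx'zin, hx'z]
    have e3 : (M ++ [z]).formPerm = Equiv.swap a5 z * (x' * y') := by
      rw [eqMz, hM', mul_assoc, hcy, ← mul_assoc, hcx, mul_assoc]
    have e4 : x' * (Equiv.swap a1 a4 * (Equiv.swap a4 zin * y')) =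
        Equiv.swap a1 a4 * (Equiv.swap a4 a5 * (x' * y')) := by
      have c1 : x' * Equiv.swap a1 a4 = Equiv.swap a1 a4 * x' := by
        rw [mul_swap_eq_swap_mul, hx'a1, hx'a4]
      have c2 : x' * Equiv.swap a4 zin = Equiv.swap a4 a5 * x' := by
        rw [mul_swap_eq_swap_mul, hx'a4, hx'zin]
      rw [← mul_assoc, ← mul_assoc, c1, mul_assoc (Equiv.swap a1 a4) x', c2]
      simp only [mul_assoc]
    have hid := swap_idStep a0 a1 a2 a3 a4 a5 z h01 h02 h03 h04 h05 h0z h12 h13 h14 h15 h1z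
      h23 h24 h25 h2z h34 h35 h3z h45 h4z h5z
    have hid2 := congrArg (fun g => g * (x' * y')) hid
    simp only [mul_assoc] at hid2
    rw [eqF, e3, hpdef, hqdef, hrdef]
    simp only [mul_assoc]
    rw [e4]
    exact hid2
  · -- X^3 = 1
    have hp3 : p ^ 3 = 1 := c3_cube' h01 h0z h1z
    have hq3 : q ^ 3 = 1 := c3_cube' h23 h24 h34
    have dpq : Equiv.Perm.Disjoint p q := by
      intro w
      by_cases hw2 : w = a2
      · subst hw2; exact Or.inl (c3_fix' (Ne.symm h02) (Ne.symm h12) h2z)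
      by_cases hw3 : w = a3
      · subst hw3; exact Or.inl (c3_fix' (Ne.symm h03) (Ne.symm h13) h3z)
      by_cases hw4 : w = a4
      · subst hw4; exact Or.inl (c3_fix' (Ne.symm h04) (Ne.symm h14) h4z)
      · exact Or.inr (c3_fix' hw2 hw3 hw4)
    have dpx : Equiv.Perm.Disjoint p x' := by
      intro w
      by_cases hw : x' w = w
      · exact Or.inr hw
      · have hwM := hxs _ hw
        refine Or.inl (c3_fix' ?_ ?_ ?_) <;> (rintro rfl)
        · exact haM0 hwM
        · exact haM1 hwM
        · exact hzM hwM
    have dqx : Equiv.Perm.Disjoint q x' := by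
      intro w
      by_cases hw : x' w = w
      · exact Or.inr hw
      · have hwM := hxs _ hw
        refine Or.inl (c3_fix' ?_ ?_ ?_) <;> (rintro rfl)
        · exact haM2 hwM
        · exact haM3 hwM
        · exact haM4 hwM
    rw [(dpq.commute.mul_right dpx.commute).mul_pow, dqx.commute.mul_pow, hp3, hq3, hx3,
      one_mul, one_mul]
  · -- Y^3 = 1
    have hr3 : r ^ 3 = 1 := c3_cube' h14 h1zin h4zin
    have dry : Equiv.Perm.Disjoint r y' := by
      intro w
      by_cases hw : y' w = w
      · exact Or.inr hw
      · have hwD := hys _ hw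
        have hwM : w ∈ M := dropLast_subset _ hwD
        refine Or.inl (c3_fix' ?_ ?_ ?_) <;> (rintro rfl)
        · exact haM1 hwM
        · exact haM4 hwM
        · exact hzinD hwD
    rw [dry.commute.mul_pow, hr3, hy3, one_mul]
  · -- support of X
    intro w hw
    by_contra hnL
    simp only [mem_cons, mem_append, mem_singleton, not_or] at hnL
    obtain ⟨hw0, hw1, hw2, hw3, hw4, hw5, hw6, hw7, hwt, hwz, -⟩ := hnL
    have hwM : w ∉ M := by simp only [hMdef, mem_cons, not_or]; exact ⟨hw5, hw6, hw7, hwt⟩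
    have hx'w : x' w = w := by by_contra h; exact hwM (hxs _ h)
    apply hw
    simp only [hpdef, hqdef, Equiv.Perm.mul_apply]
    rw [hx'w, swap_apply_of_ne_of_ne hw3 hw4, swap_apply_of_ne_of_ne hw2 hw3,
      swap_apply_of_ne_of_ne hw1 hwz, swap_apply_of_ne_of_ne hw0 hw1]
  · -- support of Y
    have hLdrop : (a0::a1::a2::a3::a4::a5::a6::a7::(t'++[z])).dropLast =
        a0::a1::a2::a3::a4::a5::a6::a7::t' := by
      rw [show (a0::a1::a2::a3::a4::a5::a6::a7::(t'++[z])) =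
        (a0::a1::a2::a3::a4::a5::a6::a7::t') ++ [z] by simp, dropLast_concat]
    rw [hLdrop]
    intro w hw
    by_cases hy : y' w = w
    · have hrw : r w ≠ w := by
        intro h; apply hw; rw [Equiv.Perm.mul_apply, hy, h]
      by_cases hwa1 : w = a1
      · subst hwa1; simp
      by_cases hwa4 : w = a4
      · subst hwa4; simp
      by_cases hwzin : w = zin
      · rw [hwzin]
        have h5 : zin ∈ M := hzinM
        rw [hMdef] at h5
        simp only [mem_cons] at h5 ⊢
        tauto
      · exact absurd (c3_fix' hwa1 hwa4 hwzin) hrw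
    · have hwM : w ∈ M := dropLast_subset _ (hys _ hy)
      rw [hMdef] at hwM
      simp only [mem_cons] at hwM
      simp only [mem_cons]
      tauto

theorem key : ∀ (N : ℕ) (L : List α), L.length ≤ N → L.Nodup → Odd L.length → 3 ≤ L.length →
    ∃ x y : Equiv.Perm α, L.formPerm = x * y ∧ x^3=1 ∧ y^3=1 ∧
      (∀ w, x w ≠ w → w ∈ L) ∧ (∀ w, y w ≠ w → w ∈ L.dropLast) := by
  intro N
  induction N with
  | zero =>
    intro L hlen _ _ h3
    omega
  | succ N IH =>
    intro L hlen hnd hodd h3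
    rcases L with _|⟨a0, L1⟩
    · simp at h3
    rcases L1 with _|⟨a1, L2⟩
    · simp at h3
    rcases L2 with _|⟨a2, L3⟩
    · simp at h3
    rcases L3 with _|⟨a3, L4⟩
    · exact base3 a0 a1 a2 hnd
    rcases L4 with _|⟨a4, L5⟩
    · rcases hodd with ⟨m, hm⟩; simp at hm; omega
    rcases L5 with _|⟨a5, L6⟩
    · exact base5 a0 a1 a2 a3 a4 hnd
    rcases L6 with _|⟨a6, L7⟩
    · rcases hodd with ⟨m, hm⟩; simp at hm; omega
    rcases L7 with _|⟨a7, L8⟩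
    · exact base7 a0 a1 a2 a3 a4 a5 a6 hnd
    rcases L8 with _|⟨a8, L9⟩
    · rcases hodd with ⟨m, hm⟩; simp at hm; omega
    obtain ⟨t', z, he⟩ : ∃ t' z, t' ++ [z] = a8 :: L9 :=
      ⟨(a8 :: L9).dropLast, (a8 :: L9).getLast (cons_ne_nil a8 L9),
        dropLast_append_getLast (cons_ne_nil a8 L9)⟩
    rw [← he] at hnd hodd h3 hlen ⊢
    have hlenL : (a0::a1::a2::a3::a4::a5::a6::a7::(t'++[z])).length = t'.length + 9 := by
      simp
    have ndM : (a5::a6::a7::t').Nodup := by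
      have h5 := ((((hnd.of_cons).of_cons).of_cons).of_cons).of_cons
      exact h5.sublist
        ((((t'.sublist_append_left [z]).cons₂ a7).cons₂ a6).cons₂ a5)
    have hoddM : Odd (a5::a6::a7::t').length := by
      rcases hodd with ⟨m, hm⟩
      rw [hlenL] at hm
      exact ⟨m - 3, by simp; omega⟩
    obtain ⟨x', y', hM', hx3, hy3, hxs, hys⟩ :=
      IH (a5::a6::a7::t') (by rw [hlenL] at hlen; simp; omega) ndM hoddM (by simp)
    exact step_lemma a0 a1 a2 a3 a4 a5 a6 a7 z t' hnd x' y' hM' hx3 hy3 hxs hys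

end Bases

/-- If `u` is a single cycle of odd length `k ≥ 3`, then there exists `h` with
`h^3 = 1` and `(uh)^3 = 1`. -/
theorem stmt6 {n : ℕ} (u : Equiv.Perm (Fin n)) (k : ℕ) (hu : u.IsCycle)
    (hk : u.support.card = k) (hkodd : Odd k) (hk3 : 3 ≤ k) :
    ∃ h : Equiv.Perm (Fin n), h ^ 3 = 1 ∧ (u * h) ^ 3 = 1 := by
  have h0 : 0 < u.support.card := by omega
  obtain ⟨a, ha⟩ := Finset.card_pos.mp h0
  have hfix : u a ≠ a := Equiv.Perm.mem_support.mp ha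
  have hc : u.cycleOf a = u := hu.cycleOf_eq hfix
  have hL1 : (u.toList a).formPerm = u := by rw [Equiv.Perm.formPerm_toList, hc]
  have hL2 : (u.toList a).length = k := by rw [Equiv.Perm.length_toList, hc, hk]
  have hL3 : (u.toList a).Nodup := Equiv.Perm.nodup_toList u a
  obtain ⟨x, y, hxy, hx3, hy3, -, -⟩ := key k (u.toList a) (by rw [hL2]) hL3
    (by rw [hL2]; exact hkodd) (by rw [hL2]; exact hk3)
  refine ⟨y⁻¹, ?_, ?_⟩
  · rw [inv_pow, hy3, inv_one]
  · rw [← hL1, hxy, mul_inv_cancel_right, hx3]
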